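/- Let X ≥ −1 be a random variable, and conditionally on X let x_1,...,x_k be i.i.d. [−1,1]-valued (or bounded) random variables with E[x_i | X] = X, satisfying the Hoeffding bound P(|x̄_k − X| > ε | X) ≤ exp(−2ε²k) for all ε > 0, where x̄_k = (1/k)·Σ x_t. Then for any C > 0, 0 < ε ≤ C, and δ > 0: E[X · 1{x̄_k ≥ C}] ≥ (C − ε)·(1 − exp(−2δ²k))·P(X ≥ C + δ) − exp(−2ε²k). -/

import Mathlib

open MeasureTheory ProbabilityTheory

/-- Lower bound on the truncated expectation of a latent mean `X` given that the empirical
estimate `x̄_k` exceeds a threshold `C`, assuming the Hoeffding bound conditionally on `X`: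
`E[X · 1{x̄_k ≥ C}] ≥ (C − ε)(1 − exp(−2δ²k)) P(X ≥ C + δ) − exp(−2ε²k)`. -/
theorem stmt_5 {Ω : Type*} [MeasurableSpace Ω] (μ : Measure Ω) [IsProbabilityMeasure μ]
    (k : ℕ) (X xbar : Ω → ℝ) (hXmeas : Measurable X) (hxbarmeas : Measurable xbar)
    (hXint : Integrable X μ)
    (hXlb : ∀ᵐ ω ∂μ, (-1 : ℝ) ≤ X ω)
    (hoeffding : ∀ ε : ℝ, 0 < ε → ∀ B : Set ℝ, MeasurableSet B →
      μ ({ω | ε < |xbar ω - X ω|} ∩ X ⁻¹' B)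
        ≤ ENNReal.ofReal (Real.exp (-2 * ε ^ 2 * k)) * μ (X ⁻¹' B))
    (C ε δ : ℝ) (hC : 0 < C) (hε : 0 < ε) (hεC : ε ≤ C) (hδ : 0 < δ) :
    (C - ε) * (1 - Real.exp (-2 * δ ^ 2 * k)) * (μ {ω | C + δ ≤ X ω}).toReal
        - Real.exp (-2 * ε ^ 2 * k)
      ≤ ∫ ω in {ω | C ≤ xbar ω}, X ω ∂μ := by
  set eε := Real.exp (-2 * ε ^ 2 * k) with heε
  set eδ := Real.exp (-2 * δ ^ 2 * k) with heδ
  have heεpos : 0 < eε := Real.exp_pos _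
  have heδpos : 0 < eδ := Real.exp_pos _
  set A := {ω | C ≤ xbar ω} with hAdef
  set S := {ω | C - ε ≤ X ω} with hSdef
  have hA : MeasurableSet A := measurableSet_le measurable_const hxbarmeas
  have hS : MeasurableSet S := measurableSet_le measurable_const hXmeas
  set B1 := A ∩ S with hB1def
  set B2 := A \ S with hB2def
  have hB1m : MeasurableSet B1 := hA.inter hS
  have hB2m : MeasurableSet B2 := hA.diff hS
  have hdisj : Disjoint B1 B2 := Set.disjoint_left.mpr fun ω h1 h2 => h2.2 h1.2
  have hsplit : ∫ ω in A, X ω ∂μ = ∫ ω in B1, X ω ∂μ + ∫ ω in B2, X ω ∂μ := by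
    rw [← setIntegral_union hdisj hB2m hXint.integrableOn hXint.integrableOn,
      Set.inter_union_diff]
  -- bound on B2 measure
  have hB2sub : B2 ⊆ {ω | ε < |xbar ω - X ω|} ∩ X ⁻¹' (Set.Iio (C - ε)) := by
    rintro ω ⟨hωA, hωS⟩
    have hx : X ω < C - ε := lt_of_not_ge hωS
    have hb : C ≤ xbar ω := hωA
    constructor
    · have : ε < xbar ω - X ω := by linarith
      exact lt_of_lt_of_le this (le_abs_self _)
    · exact hx
  have hB2meas : (μ B2).toReal ≤ eε := by
    have h := hoeffding ε hε (Set.Iio (C - ε)) measurableSet_Iio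
    have h2 : μ B2 ≤ ENNReal.ofReal eε := by
      calc μ B2 ≤ ENNReal.ofReal eε * μ (X ⁻¹' Set.Iio (C - ε)) :=
            le_trans (measure_mono hB2sub) h
        _ ≤ ENNReal.ofReal eε * 1 := by
            exact mul_le_mul_right prob_le_one _
        _ = ENNReal.ofReal eε := mul_one _
    exact ENNReal.toReal_le_of_le_ofReal heεpos.le h2
  -- bound on B1 measure
  set T := {ω | C + δ ≤ X ω} with hTdef
  have hTeq : T = X ⁻¹' (Set.Ici (C + δ)) := rfl
  set bad := {ω | δ < |xbar ω - X ω|} ∩ X ⁻¹' (Set.Ici (C + δ)) with hbaddef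
  have hTsub : T ⊆ B1 ∪ bad := by
    intro ω hω
    have hx : C + δ ≤ X ω := hω
    by_cases hb : δ < |xbar ω - X ω|
    · exact Or.inr ⟨hb, hx⟩
    · left
      push_neg at hb
      have habs := abs_le.mp hb
      constructor
      · have : C ≤ xbar ω := by linarith [habs.1]
        exact this
      · show C - ε ≤ X ω; linarith
  have hbadmeas : (μ bad).toReal ≤ eδ * (μ T).toReal := by
    have h := hoeffding δ hδ (Set.Ici (C + δ)) measurableSet_Ici
    have hfin : μ (X ⁻¹' Set.Ici (C + δ)) ≠ ⊤ := measure_ne_top μ _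
    calc (μ bad).toReal ≤ (ENNReal.ofReal eδ * μ (X ⁻¹' Set.Ici (C + δ))).toReal := by
          apply ENNReal.toReal_mono _ h
          exact ENNReal.mul_ne_top ENNReal.ofReal_ne_top hfin
      _ = eδ * (μ T).toReal := by
          rw [ENNReal.toReal_mul, ENNReal.toReal_ofReal heδpos.le, hTeq]
  have hB1meas : (1 - eδ) * (μ T).toReal ≤ (μ B1).toReal := by
    have h1 : (μ T).toReal ≤ (μ B1).toReal + (μ bad).toReal := by
      calc (μ T).toReal ≤ (μ (B1 ∪ bad)).toReal := by
            apply ENNReal.toReal_mono (measure_ne_top μ _) (measure_mono hTsub)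
        _ ≤ (μ B1 + μ bad).toReal := by
            apply ENNReal.toReal_mono _ (measure_union_le _ _)
            exact ENNReal.add_ne_top.mpr ⟨measure_ne_top μ _, measure_ne_top μ _⟩
        _ = (μ B1).toReal + (μ bad).toReal :=
            ENNReal.toReal_add (measure_ne_top μ _) (measure_ne_top μ _)
    nlinarith [hbadmeas]
  -- integral bounds
  have hI1 : (C - ε) * (μ B1).toReal ≤ ∫ ω in B1, X ω ∂μ := by
    apply setIntegral_ge_of_const_le_real hB1m (measure_ne_top μ _)
    · intro ω hω; exact hω.2
    · exact hXint.integrableOn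
  have hI2 : -eε ≤ ∫ ω in B2, X ω ∂μ := by
    have h1 : ∫ ω in B2, (-1 : ℝ) ∂μ ≤ ∫ ω in B2, X ω ∂μ := by
      apply setIntegral_mono_ae (integrableOn_const (measure_ne_top μ _))
        hXint.integrableOn hXlb
    have h2 : ∫ ω in B2, (-1 : ℝ) ∂μ = -(μ B2).toReal := by
      rw [setIntegral_const]; simp; rfl
    linarith
  have hCε : 0 ≤ C - ε := by linarith
  have hTnn : 0 ≤ (μ T).toReal := ENNReal.toReal_nonneg
  have hkey : (C - ε) * ((1 - eδ) * (μ T).toReal) ≤ (C - ε) * (μ B1).toReal :=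
    mul_le_mul_of_nonneg_left hB1meas hCε
  rw [hsplit] at *
  nlinarith
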